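/- arXiv:2411.13170 — 2 statements merged into one kernel-verified Lean document; each statement's English description precedes it below -/
import Mathlib

section
/- Let $n$ be a squarefree positive integer with exactly $l$ distinct prime factors, $l \geq 1$. Then $\sum_{d \mid n} \mu(d) (\log d)^{l} = (-1)^{l}\, l! \prod_{p \mid n} \log p$, where the product runs over the prime divisors of $n$. -/
open ArithmeticFunction
open scoped ArithmeticFunction.Moebius

lemma aux_ie (x : ℕ → ℝ) :
    ∀ (P : Finset ℕ) (k : ℕ) (c : ℝ), k ≤ P.card →
      ∑ S ∈ P.powerset, (-1 : ℝ) ^ S.card * (c + ∑ p ∈ S, x p) ^ k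
        = if k = P.card then (-1) ^ P.card * (k.factorial : ℝ) * ∏ p ∈ P, x p else 0 := by
  intro P
  induction P using Finset.induction_on with
  | empty =>
      intro k c hk
      simp only [Finset.card_empty, Nat.le_zero] at hk
      subst hk
      simp
  | @insert a P' ha IH =>
      intro k c hk
      rw [Finset.sum_powerset_insert ha]
      have hcard : (insert a P').card = P'.card + 1 := Finset.card_insert_of_notMem ha
      have step : ∀ t ∈ P'.powerset,
          (-1 : ℝ) ^ (insert a t).card * (c + ∑ p ∈ insert a t, x p) ^ k
            = ∑ j ∈ Finset.range (k + 1),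
                -((-1 : ℝ) ^ t.card * (c + ∑ p ∈ t, x p) ^ j * x a ^ (k - j) * (k.choose j : ℝ)) := by
        intro t ht
        have hat : a ∉ t := fun h => ha (Finset.mem_powerset.mp ht h)
        rw [Finset.card_insert_of_notMem hat, Finset.sum_insert hat]
        have hc : c + (x a + ∑ p ∈ t, x p) = (c + ∑ p ∈ t, x p) + x a := by ring
        rw [hc, add_pow, Finset.mul_sum]
        apply Finset.sum_congr rfl
        intro j hj
        ring
      have h2 : ∑ t ∈ P'.powerset, (-1 : ℝ) ^ (insert a t).card * (c + ∑ p ∈ insert a t, x p) ^ k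
          = -∑ j ∈ Finset.range (k + 1),
              (∑ t ∈ P'.powerset, (-1 : ℝ) ^ t.card * (c + ∑ p ∈ t, x p) ^ j)
                * x a ^ (k - j) * (k.choose j : ℝ) := by
        rw [Finset.sum_congr rfl step, Finset.sum_comm]
        have inner : ∀ j ∈ Finset.range (k + 1),
            (∑ t ∈ P'.powerset,
                -((-1 : ℝ) ^ t.card * (c + ∑ p ∈ t, x p) ^ j * x a ^ (k - j) * (k.choose j : ℝ)))
              = -((∑ t ∈ P'.powerset, (-1 : ℝ) ^ t.card * (c + ∑ p ∈ t, x p) ^ j)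
                  * x a ^ (k - j) * (k.choose j : ℝ)) := by
          intro j hj
          rw [Finset.sum_neg_distrib, Finset.sum_mul, Finset.sum_mul]
        rw [Finset.sum_congr rfl inner, Finset.sum_neg_distrib]
      rw [h2, Finset.sum_range_succ]
      have hBk : ((∑ t ∈ P'.powerset, (-1 : ℝ) ^ t.card * (c + ∑ p ∈ t, x p) ^ k)
            * x a ^ (k - k) * (k.choose k : ℝ))
          = ∑ t ∈ P'.powerset, (-1 : ℝ) ^ t.card * (c + ∑ p ∈ t, x p) ^ k := by
        simp
      rw [hBk]
      have hre : ∀ (A X : ℝ), A + -(X + A) = -X := fun A X => by ring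
      rw [hre]
      by_cases hk' : k = P'.card + 1
      · have hsum : ∑ j ∈ Finset.range k,
              (∑ t ∈ P'.powerset, (-1 : ℝ) ^ t.card * (c + ∑ p ∈ t, x p) ^ j)
                * x a ^ (k - j) * (k.choose j : ℝ)
            = ((-1 : ℝ) ^ P'.card * (P'.card.factorial : ℝ) * ∏ p ∈ P', x p)
                * x a ^ (k - P'.card) * (k.choose P'.card : ℝ) := by
          rw [Finset.sum_eq_single P'.card]
          · rw [IH P'.card c le_rfl, if_pos rfl]
          · intro j hj hne
            simp only [Finset.mem_range] at hj
            rw [IH j c (by omega), if_neg hne]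
            simp
          · intro h
            exact absurd (Finset.mem_range.mpr (by omega)) h
        rw [hsum, if_pos (by omega), Finset.prod_insert ha, hcard, hk',
          Nat.choose_succ_self_right, Nat.add_sub_cancel_left, Nat.factorial_succ]
        push_cast
        ring
      · have hsum : ∑ j ∈ Finset.range k,
              (∑ t ∈ P'.powerset, (-1 : ℝ) ^ t.card * (c + ∑ p ∈ t, x p) ^ j)
                * x a ^ (k - j) * (k.choose j : ℝ) = 0 := by
          apply Finset.sum_eq_zero
          intro j hj
          simp only [Finset.mem_range] at hj
          rw [IH j c (by omega), if_neg (by omega)]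
          simp
        rw [hsum, neg_zero, if_neg (by omega)]

theorem stmt_8 (n l : ℕ) (hn : 0 < n) (hsq : Squarefree n)
    (hl : n.primeFactors.card = l) (hl1 : 1 ≤ l) :
    ∑ d ∈ n.divisors, (μ d : ℝ) * (Real.log d) ^ l
      = (-1) ^ l * (l.factorial : ℝ) * ∏ p ∈ n.primeFactors, Real.log p := by
  have h0 : n ≠ 0 := hn.ne'
  rw [← Nat.divisors_filter_squarefree_of_squarefree hsq,
    Nat.sum_divisors_filter_squarefree h0]
  have heq : (UniqueFactorizationMonoid.normalizedFactors n).toFinset = n.primeFactors := by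
    rw [Nat.factors_eq]
    simp
  rw [heq]
  have key : ∀ S ∈ n.primeFactors.powerset,
      ((μ S.val.prod : ℤ) : ℝ) * Real.log (S.val.prod : ℕ) ^ l
        = (-1 : ℝ) ^ S.card * ((0 : ℝ) + ∑ p ∈ S, Real.log p) ^ l := by
    intro S hS
    rw [Finset.mem_powerset] at hS
    have hprime : ∀ p ∈ S, Nat.Prime p := fun p hp => Nat.prime_of_mem_primeFactors (hS hp)
    have hval : S.val.prod = ∏ p ∈ S, p := by
      rw [Finset.prod_eq_multiset_prod]
      simp
    rw [hval]
    have hdvd : (∏ p ∈ S, p) ∣ n :=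
      (Finset.prod_dvd_prod_of_subset S n.primeFactors _ hS).trans (Nat.prod_primeFactors_dvd n)
    have hsd : Squarefree (∏ p ∈ S, p) := hsq.squarefree_of_dvd hdvd
    have hne : (∏ p ∈ S, p) ≠ 0 := hsd.ne_zero
    have hmu : μ (∏ p ∈ S, p) = (-1) ^ S.card := by
      rw [moebius_apply_of_squarefree hsd,
        ← (cardDistinctFactors_eq_cardFactors_iff_squarefree hne).mpr hsd]
      congr 1
      rw [cardDistinctFactors_apply, ← List.card_toFinset, Nat.toFinset_factors,
        Nat.primeFactors_prod hprime]
    have hlog : Real.log ((∏ p ∈ S, p : ℕ) : ℝ) = ∑ p ∈ S, Real.log p := by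
      rw [Nat.cast_prod]
      exact Real.log_prod fun p hp => Nat.cast_ne_zero.mpr (hprime p hp).ne_zero
    rw [hmu, hlog, zero_add]
    push_cast
    ring
  rw [Finset.sum_congr rfl key, aux_ie (fun p => Real.log p) n.primeFactors l 0 (by omega),
    if_pos hl.symm, hl]
end

section
/- Let $n$ be a squarefree positive integer with exactly $l$ distinct prime factors, and let $P(x) = \sum_{k=0}^{l} c_k x^k$ be a polynomial of degree at most $l$ with complex coefficients. Then $\sum_{d \mid n} \mu(d) P(\log d) = (-1)^{l}\, l!\, c_l \prod_{p \mid n} \log p$. -/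
lemma aux_pow_sum (s : Finset ℕ) (g : ℕ → ℂ) : ∀ k : ℕ, k ≤ s.card →
    ∑ t ∈ s.powerset, (-1 : ℂ) ^ t.card * (∑ a ∈ t, g a) ^ k =
      if k = s.card then (-1) ^ s.card * (k.factorial : ℂ) * ∏ a ∈ s, g a else 0 := by
  induction s using Finset.induction with
  | empty =>
      intro k hk
      obtain rfl : k = 0 := by simpa using hk
      simp
  | @insert a s ha ih =>
      intro k hk
      rw [Finset.sum_powerset_insert ha]
      have h1 : ∀ t ∈ s.powerset, (-1 : ℂ) ^ (insert a t).card * (∑ b ∈ insert a t, g b) ^ k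
          = -((-1 : ℂ) ^ t.card * (g a + ∑ b ∈ t, g b) ^ k) := by
        intro t ht
        have hat : a ∉ t := fun h => ha (Finset.mem_powerset.mp ht h)
        rw [Finset.card_insert_of_notMem hat, Finset.sum_insert hat]
        ring
      rw [Finset.sum_congr rfl h1, ← Finset.sum_add_distrib]
      have expand : ∀ t ∈ s.powerset,
          (-1 : ℂ) ^ t.card * (∑ b ∈ t, g b) ^ k + -((-1 : ℂ) ^ t.card * (g a + ∑ b ∈ t, g b) ^ k)
          = ∑ j ∈ Finset.range k,
              -(((-1 : ℂ) ^ t.card * (∑ b ∈ t, g b) ^ j) * (g a ^ (k - j) * (k.choose j : ℂ))) := by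
        intro t ht
        rw [add_comm (g a), add_pow, Finset.sum_range_succ, Nat.sub_self, pow_zero,
          Nat.choose_self]
        push_cast
        rw [mul_one, mul_one, mul_add, Finset.mul_sum]
        rw [show ∀ x y : ℂ, x + -(y + x) = -y from fun x y => by ring]
        rw [← Finset.sum_neg_distrib]
        exact Finset.sum_congr rfl fun j hj => by ring
      rw [Finset.sum_congr rfl expand, Finset.sum_comm]
      have step : ∀ j ∈ Finset.range k,
          ∑ t ∈ s.powerset,
            -(((-1 : ℂ) ^ t.card * (∑ b ∈ t, g b) ^ j) * (g a ^ (k - j) * (k.choose j : ℂ)))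
          = -((if j = s.card then (-1 : ℂ) ^ s.card * (j.factorial : ℂ) * ∏ a ∈ s, g a else 0)
              * (g a ^ (k - j) * (k.choose j : ℂ))) := by
        intro j hj
        rw [Finset.sum_neg_distrib, ← Finset.sum_mul, ih j ?_]
        · rw [Finset.mem_range] at hj
          rw [Finset.card_insert_of_notMem ha] at hk
          omega
      rw [Finset.sum_congr rfl step]
      rw [Finset.card_insert_of_notMem ha] at hk ⊢
      by_cases hkc : k = s.card + 1
      · subst hkc
        rw [Finset.sum_eq_single s.card]
        · simp only [if_pos rfl, if_pos rfl]
          rw [Finset.prod_insert ha]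
          have : s.card + 1 - s.card = 1 := by omega
          rw [this, Nat.choose_succ_self_right, pow_one, Nat.factorial_succ]
          push_cast
          ring
        · intro j hj hjne
          rw [if_neg hjne]; ring
        · intro h
          exact absurd (Finset.self_mem_range_succ s.card) h
      · rw [if_neg hkc]
        apply Finset.sum_eq_zero
        intro j hj
        rw [Finset.mem_range] at hj
        rw [if_neg (by omega)]
        ring

open ArithmeticFunction
open scoped ArithmeticFunction.Moebius

theorem stmt_9 (n l : ℕ) (hn : 0 < n) (hsq : Squarefree n)
    (hl : n.primeFactors.card = l) (c : ℕ → ℂ) :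
    ∑ d ∈ n.divisors,
        (μ d : ℂ) * ∑ k ∈ Finset.range (l + 1), c k * (Real.log d : ℂ) ^ k
      = (-1) ^ l * (l.factorial : ℂ) * c l * ∏ p ∈ n.primeFactors, (Real.log p : ℂ) := by
  have hn0 : n ≠ 0 := hn.ne'
  have key : ∑ d ∈ n.divisors,
        (μ d : ℂ) * ∑ k ∈ Finset.range (l + 1), c k * (Real.log d : ℂ) ^ k
      = ∑ t ∈ n.primeFactors.powerset,
          (-1 : ℂ) ^ t.card * ∑ k ∈ Finset.range (l + 1),
            c k * ((∑ p ∈ t, (Real.log p : ℂ)) ^ k) := by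
    refine Finset.sum_nbij' (fun d => d.primeFactors) (fun t => ∏ p ∈ t, p) ?_ ?_ ?_ ?_ ?_
    · intro d hd
      rw [Nat.mem_divisors] at hd
      exact Finset.mem_powerset.mpr (Nat.primeFactors_mono hd.1 hn0)
    · intro t ht
      rw [Finset.mem_powerset] at ht
      rw [Nat.mem_divisors]
      exact ⟨(Finset.prod_dvd_prod_of_subset _ _ _ ht).trans
        (Nat.prod_primeFactors_dvd n), hn0⟩
    · intro d hd
      rw [Nat.mem_divisors] at hd
      exact Nat.prod_primeFactors_of_squarefree (hsq.squarefree_of_dvd hd.1)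
    · intro t ht
      rw [Finset.mem_powerset] at ht
      exact Nat.primeFactors_prod fun p hp => Nat.prime_of_mem_primeFactors (ht hp)
    · intro d hd
      rw [Nat.mem_divisors] at hd
      have hdsq : Squarefree d := hsq.squarefree_of_dvd hd.1
      have hprod : ∏ p ∈ d.primeFactors, p = d := Nat.prod_primeFactors_of_squarefree hdsq
      congr 1
      · have hd0 : d ≠ 0 := hdsq.ne_zero
        rw [moebius_apply_of_squarefree hdsq,
          ← (cardDistinctFactors_eq_cardFactors_iff_squarefree hd0).mpr hdsq,
          cardDistinctFactors_apply]
        have : d.primeFactors.card = d.primeFactorsList.dedup.length :=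
          List.card_toFinset _
        push_cast [this]
        ring
      · refine Finset.sum_congr rfl fun k hk => ?_
        congr 1
        have hcast : ((d : ℝ)) = ∏ p ∈ d.primeFactors, (p : ℝ) := by
          rw [← Nat.cast_prod, hprod]
        have : Real.log d = ∑ p ∈ d.primeFactors, Real.log p := by
          rw [hcast, Real.log_prod]
          intro p hp
          exact_mod_cast (Nat.prime_of_mem_primeFactors hp).pos.ne'
        rw [this]
        push_cast
        ring
  rw [key]
  have swap : ∑ t ∈ n.primeFactors.powerset,
        (-1 : ℂ) ^ t.card * ∑ k ∈ Finset.range (l + 1),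
          c k * ((∑ p ∈ t, (Real.log p : ℂ)) ^ k)
      = ∑ k ∈ Finset.range (l + 1), c k *
          ∑ t ∈ n.primeFactors.powerset, (-1 : ℂ) ^ t.card * (∑ p ∈ t, (Real.log p : ℂ)) ^ k := by
    simp only [Finset.mul_sum]
    rw [Finset.sum_comm]
    exact Finset.sum_congr rfl fun k _ => Finset.sum_congr rfl fun t _ => by ring
  rw [swap]
  rw [Finset.sum_congr rfl fun k hk =>
    by rw [aux_pow_sum _ _ k (hl ▸ Finset.mem_range_succ_iff.mp hk)]]
  rw [hl]
  rw [Finset.sum_eq_single l]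
  · rw [if_pos rfl]; ring
  · intro j hj hjne
    rw [if_neg hjne, mul_zero]
  · intro h
    exact absurd (Finset.self_mem_range_succ l) h
end
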